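/- For all n ∈ ℕ and all 0 ≤ i, j ≤ n, the entries of L_n satisfy the closed-form formula L_n[i,j] = Σ_{α ∈ Q^I_{i,j}} ∏_{r=j}^{i−1} t_{r+1, α_{i−r}} (where the empty sum is 0 and the empty product is 1). -/

import Mathlib

/-- The heights of an `L^m_n`-path of order `n` (the abscissas `x i = m + i` are
determined, so only the heights `y i ∈ {0, …, n}`, encoded as `Fin (n+1)`, are recorded):
`y (k+1) ∈ {y k, y k - 1}` and a fall step at position `k` forces `y k ≥ n - k`. -/
def IsLPath (n : ℕ) (y : Fin (n + 1) → Fin (n + 1)) : Prop :=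
  ∀ k : Fin n,
    ((y k.succ = y k.castSucc ∨ (y k.succ : ℕ) + 1 = (y k.castSucc : ℕ)) ∧
      ((y k.succ : ℕ) + 1 = (y k.castSucc : ℕ) → n - (k : ℕ) ≤ (y k.castSucc : ℕ)))

/-- The weight of an `L`-type path: a fall step from `(k, j)` to `(k+1, j-1)` has weight
`t j (k + j - n)` and a horizontal step has weight `1`; the weight of the path is the
product of the weights of its steps. -/
def lweight {R : Type*} [CommRing R] (n : ℕ) (t : ℕ → ℕ → R)
    (y : Fin (n + 1) → Fin (n + 1)) : R :=
  ∏ k : Fin n,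
    if (y k.succ : ℕ) + 1 = (y k.castSucc : ℕ)
    then t (y k.castSucc : ℕ) ((k : ℕ) + (y k.castSucc : ℕ) - n) else 1

open scoped Classical in
/-- The matrix `L n`: its `(i, j)` entry is the sum of the weights of all `L^0_n`-paths
with `y 0 = i` and `y n = j`. -/
noncomputable def Lmat {R : Type*} [CommRing R] (n : ℕ) (t : ℕ → ℕ → R) :
    Matrix (Fin (n + 1)) (Fin (n + 1)) R :=
  Matrix.of fun i j =>
    ∑ y ∈ Finset.univ.filter
        (fun y : Fin (n + 1) → Fin (n + 1) => IsLPath n y ∧ y 0 = i ∧ y (Fin.last n) = j),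
      lweight n t y

open scoped Classical in
/-- `Q^I_{i,j}`: for `i ≥ j`, the weakly increasing sequences `α₁ ≤ … ≤ α_{i-j}` of
nonnegative integers with `αᵣ ≤ i - r` (here zero-indexed, so `α k ≤ i - (k+1)`; the
values are encoded in `Fin (i+1)`); for `i = j` only the empty sequence, and for `i < j`
the empty set. -/
noncomputable def QIset (i j : ℕ) : Finset (Fin (i - j) → Fin (i + 1)) :=
  if j ≤ i then
    Finset.univ.filter
      (fun α => Monotone α ∧ ∀ r : Fin (i - j), (α r : ℕ) ≤ i - ((r : ℕ) + 1))
  else ∅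


namespace Stmt9Aux

/-- Lipschitz/antitone facts for a step function. -/
lemma lip (g : ℕ → ℕ) (n : ℕ) (hstep : ∀ m < n, g (m+1) = g m ∨ g (m+1) + 1 = g m) :
    ∀ a b, a ≤ b → b ≤ n → g b ≤ g a ∧ g a ≤ g b + (b - a) := by
  have key : ∀ e a, a + e ≤ n → g (a+e) ≤ g a ∧ g a ≤ g (a+e) + e := by
    intro e
    induction e with
    | zero => intro a _; rw [Nat.add_zero]; omega
    | succ e ih =>
      intro a ha
      have h1 := ih (a+1) (by omega)
      have h2 := hstep a (by omega)
      rw [show a + 1 + e = a + (e+1) by omega] at h1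
      omega
  intro a b hab hbn
  have h := key (b - a) a (by omega)
  rw [show a + (b-a) = b by omega] at h
  exact h

lemma Kspec (g : ℕ → ℕ) (n i j : ℕ)
    (hstep : ∀ m < n, g (m+1) = g m ∨ g (m+1) + 1 = g m)
    (hfall : ∀ m < n, g (m+1) + 1 = g m → n - m ≤ g m)
    (hg0 : g 0 = i) (hgn : g n = j)
    (h : ℕ) (hjh : j < h) (hhi : h ≤ i) :
    Nat.findGreatest (fun m => h ≤ g m) n < n ∧
    g (Nat.findGreatest (fun m => h ≤ g m) n) = h ∧
    g (Nat.findGreatest (fun m => h ≤ g m) n + 1) + 1 = h ∧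
    n ≤ Nat.findGreatest (fun m => h ≤ g m) n + h ∧
    ∀ m ≤ n, (h ≤ g m ↔ m ≤ Nat.findGreatest (fun m => h ≤ g m) n) := by
  set K := Nat.findGreatest (fun m => h ≤ g m) n with hKdef
  have hKle : K ≤ n := Nat.findGreatest_le n
  have hPK : h ≤ g K := Nat.findGreatest_spec (P := fun m => h ≤ g m) (m := 0) (Nat.zero_le n) (by omega)
  have hKn : K < n := by
    rcases eq_or_lt_of_le hKle with h' | h'
    · exfalso; rw [h'] at hPK; omega
    · exact h'
  have hK1 : ¬ h ≤ g (K+1) := Nat.findGreatest_is_greatest (P := fun m => h ≤ g m) (n := n) (k := K+1) (by omega) (by omega)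
  have hstepK := hstep K hKn
  have hfallK : g (K+1) + 1 = g K := by omega
  have hgK : g K = h := by omega
  refine ⟨hKn, hgK, by omega, ?_, ?_⟩
  · have := hfall K hKn hfallK; omega
  · intro m hm
    constructor
    · intro hgm
      by_contra hcon
      exact Nat.findGreatest_is_greatest (P := fun m => h ≤ g m) (n := n) (by omega) hm hgm
    · intro hmk
      have := (lip g n hstep m K hmk hKle).1
      omega

/-- Monotonicity of the fall positions. -/
lemma Kmono (g : ℕ → ℕ) (n i j : ℕ)
    (hstep : ∀ m < n, g (m+1) = g m ∨ g (m+1) + 1 = g m)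
    (hfall : ∀ m < n, g (m+1) + 1 = g m → n - m ≤ g m)
    (hg0 : g 0 = i) (hgn : g n = j)
    (h h' : ℕ) (hjh : j < h') (hh : h' ≤ h) (hhi : h ≤ i) :
    Nat.findGreatest (fun m => h ≤ g m) n ≤ Nat.findGreatest (fun m => h' ≤ g m) n := by
  obtain ⟨hKn, hgK, _, _, _⟩ := Kspec g n i j hstep hfall hg0 hgn h (by omega) hhi
  obtain ⟨_, _, _, _, hiff'⟩ := Kspec g n i j hstep hfall hg0 hgn h' hjh (by omega)
  exact (hiff' _ (by omega)).1 (by omega)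

/-- A fall at `m` from height `g m` occurs exactly at the `findGreatest` position. -/
lemma Kfall (g : ℕ → ℕ) (n i j : ℕ)
    (hstep : ∀ m < n, g (m+1) = g m ∨ g (m+1) + 1 = g m)
    (hfall : ∀ m < n, g (m+1) + 1 = g m → n - m ≤ g m)
    (hg0 : g 0 = i) (hgn : g n = j)
    (m : ℕ) (hm : m < n) (hf : g (m+1) + 1 = g m) :
    j < g m ∧ g m ≤ i ∧ Nat.findGreatest (fun m' => g m ≤ g m') n = m := by
  have hlip := lip g n hstep
  have h1 : g n ≤ g (m+1) := (hlip (m+1) n (by omega) (le_refl n)).1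
  have h2 : g m ≤ g 0 := (hlip 0 m (by omega) (by omega)).1
  have hjm : j < g m := by omega
  have hmi : g m ≤ i := by omega
  obtain ⟨hKn, hgK, hgK1, _, hiff⟩ := Kspec g n i j hstep hfall hg0 hgn (g m) hjm hmi
  refine ⟨hjm, hmi, ?_⟩
  set K := Nat.findGreatest (fun m' => g m ≤ g m') n
  have hmK : m ≤ K := (hiff m (by omega)).1 (le_refl _)
  rcases eq_or_lt_of_le hmK with h' | h'
  · omega
  · exfalso
    have := (hiff (m+1) (by omega)).2 (by omega)
    omega

end Stmt9Aux

namespace Stmt9Aux2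
open Stmt9Aux Finset

/-- ℕ-valued height function of a path. -/
def gOf (n : ℕ) (y : Fin (n+1) → Fin (n+1)) : ℕ → ℕ :=
  fun m => (y ⟨min m n, by omega⟩ : ℕ)

lemma gOf_val {n : ℕ} (y : Fin (n+1) → Fin (n+1)) (m : Fin (n+1)) :
    gOf n y (m : ℕ) = (y m : ℕ) := by
  unfold gOf
  congr 1
  exact Fin.ext (by simp [Nat.min_eq_left (by omega : (m:ℕ) ≤ n)])

lemma gOf_mk {n : ℕ} (y : Fin (n+1) → Fin (n+1)) (m : ℕ) (hm : m ≤ n) :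
    gOf n y m = (y ⟨m, by omega⟩ : ℕ) :=
  gOf_val y ⟨m, by omega⟩

lemma path_step {n : ℕ} {y : Fin (n+1) → Fin (n+1)} (hy : IsLPath n y) :
    ∀ m < n, (gOf n y (m+1) = gOf n y m ∨ gOf n y (m+1) + 1 = gOf n y m) ∧
      (gOf n y (m+1) + 1 = gOf n y m → n - m ≤ gOf n y m) := by
  intro m hm
  have h := hy ⟨m, hm⟩
  have e1 : gOf n y (m+1) = (y (Fin.succ ⟨m,hm⟩) : ℕ) := gOf_mk y (m+1) (by omega) ▸ rfl
  have e2 : gOf n y m = (y (Fin.castSucc ⟨m,hm⟩) : ℕ) := gOf_mk y m (by omega) ▸ rfl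
  rw [e1, e2]
  exact ⟨h.1.imp (fun h' => by rw [h']) id, h.2⟩

end Stmt9Aux2


namespace Stmt9Aux3
open Finset

lemma card_filter_val_lt {d : ℕ} (b : ℕ) (hb : b ≤ d) (p : Fin d → Prop) [DecidablePred p]
    (hp : ∀ q, p q ↔ (q : ℕ) < b) :
    (Finset.univ.filter p).card = b := by
  rw [show b = (Finset.range b).card from (Finset.card_range b).symm]
  refine Finset.card_bij' (fun q _ => (q : ℕ))
    (fun r hr => (⟨r, by have := Finset.mem_range.1 hr; omega⟩ : Fin d)) ?_ ?_ ?_ ?_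
  · intro a ha; exact Finset.mem_range.2 ((hp a).1 (Finset.mem_filter.1 ha).2)
  · intro r hr; exact Finset.mem_filter.2 ⟨Finset.mem_univ _, (hp _).2 (Finset.mem_range.1 hr)⟩
  · intro a ha; exact Fin.ext rfl
  · intro r hr; rfl

/-- Fall position determined by a sequence `α`. -/
def Pf (n i d : ℕ) (α : Fin d → Fin (i+1)) (q : Fin d) : ℕ := (α q : ℕ) + (q : ℕ) + (n - i)

/-- Number of fall positions `< m`. -/
def cf (n i d : ℕ) (α : Fin d → Fin (i+1)) (m : ℕ) : ℕ :=
  (Finset.univ.filter (fun q : Fin d => Pf n i d α q < m)).card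

lemma Pf_strictMono {n i d : ℕ} {α : Fin d → Fin (i+1)} (hmono : Monotone α) :
    StrictMono (Pf n i d α) := by
  intro a b hab
  have h1 : (α a : ℕ) ≤ (α b : ℕ) := hmono hab.le
  have h2 : (a : ℕ) < (b : ℕ) := hab
  unfold Pf; omega

lemma cf_le {n i d : ℕ} (α : Fin d → Fin (i+1)) (m : ℕ) : cf n i d α m ≤ d := by
  have := Finset.card_filter_le (Finset.univ : Finset (Fin d)) (fun q => Pf n i d α q < m)
  simpa [cf] using this

lemma cf_zero {n i d : ℕ} (α : Fin d → Fin (i+1)) : cf n i d α 0 = 0 := by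
  simp [cf]

lemma cf_mono {n i d : ℕ} (α : Fin d → Fin (i+1)) {m m' : ℕ} (h : m ≤ m') :
    cf n i d α m ≤ cf n i d α m' := by
  apply Finset.card_le_card
  intro q hq
  simp only [Finset.mem_filter, Finset.mem_univ, true_and] at hq ⊢
  omega

lemma Pf_lt_n {n i d : ℕ} {α : Fin d → Fin (i+1)} (hdi : d ≤ i) (hin : i ≤ n)
    (hbd : ∀ q : Fin d, (α q : ℕ) ≤ i - ((q : ℕ) + 1)) (q : Fin d) : Pf n i d α q < n := by
  have h1 := hbd q
  have h2 : (q : ℕ) < d := q.isLt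
  unfold Pf; omega

lemma cf_n {n i d : ℕ} {α : Fin d → Fin (i+1)} (hdi : d ≤ i) (hin : i ≤ n)
    (hbd : ∀ q : Fin d, (α q : ℕ) ≤ i - ((q : ℕ) + 1)) : cf n i d α n = d := by
  apply card_filter_val_lt d le_rfl
  intro q
  simp only [iff_true_intro q.isLt, iff_true]
  exact Pf_lt_n hdi hin hbd q

/-- `cf` at a fall position and just after it. -/
lemma cf_at_Pf {n i d : ℕ} {α : Fin d → Fin (i+1)} (hmono : Monotone α) (q : Fin d) :
    cf n i d α (Pf n i d α q) = (q : ℕ) ∧ cf n i d α (Pf n i d α q + 1) = (q : ℕ) + 1 := by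
  have hsm := Pf_strictMono (n := n) (i := i) hmono
  constructor
  · apply card_filter_val_lt (q : ℕ) (by omega) _
    intro q'
    rw [← Fin.lt_iff_val_lt_val]
    exact hsm.lt_iff_lt
  · apply card_filter_val_lt ((q : ℕ) + 1) (by omega) _
    intro q'
    constructor
    · intro h
      have : q' ≤ q := by
        by_contra hcon
        have := hsm (show q < q' by omega)
        omega
      have : (q' : ℕ) ≤ (q : ℕ) := this
      omega
    · intro h
      have : q' ≤ q := by
        have : (q' : ℕ) ≤ (q : ℕ) := by omega
        exact this
      rcases eq_or_lt_of_le this with h' | h'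
      · rw [h']; omega
      · have := hsm h'; omega

lemma cf_succ_of_not_mem {n i d : ℕ} {α : Fin d → Fin (i+1)} (m : ℕ)
    (h : ∀ q : Fin d, Pf n i d α q ≠ m) : cf n i d α (m + 1) = cf n i d α m := by
  unfold cf
  congr 1
  apply Finset.filter_congr
  intro q _
  have := h q
  constructor <;> intro <;> omega

end Stmt9Aux3


namespace Stmt9Main
open Stmt9Aux Stmt9Aux2 Stmt9Aux3 Finset

lemma pathFacts {n : ℕ} {y : Fin (n+1) → Fin (n+1)} (hy : IsLPath n y)
    (i j : Fin (n+1)) (h0 : y 0 = i) (hl : y (Fin.last n) = j) :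
    (∀ m < n, gOf n y (m+1) = gOf n y m ∨ gOf n y (m+1) + 1 = gOf n y m) ∧
    (∀ m < n, gOf n y (m+1) + 1 = gOf n y m → n - m ≤ gOf n y m) ∧
    gOf n y 0 = (i : ℕ) ∧ gOf n y n = (j : ℕ) := by
  refine ⟨fun m hm => (path_step hy m hm).1, fun m hm => (path_step hy m hm).2, ?_, ?_⟩
  · rw [gOf_mk y 0 (Nat.zero_le n), show (⟨0, by omega⟩ : Fin (n+1)) = 0 from Fin.ext (by simp), h0]
  · rw [gOf_mk y n le_rfl, show (⟨n, by omega⟩ : Fin (n+1)) = Fin.last n from Fin.ext (by simp), hl]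

noncomputable def toα (n : ℕ) (i j : Fin (n+1)) (y : Fin (n+1) → Fin (n+1)) :
    Fin ((i:ℕ) - (j:ℕ)) → Fin ((i:ℕ) + 1) :=
  fun q => ⟨Nat.findGreatest (fun m => (i:ℕ) - (q:ℕ) ≤ gOf n y m) n + ((i:ℕ) - (q:ℕ)) - n, by
    have := Nat.findGreatest_le (P := fun m => (i:ℕ) - (q:ℕ) ≤ gOf n y m) n
    omega⟩

def toPath (n : ℕ) (i j : Fin (n+1)) (α : Fin ((i:ℕ) - (j:ℕ)) → Fin ((i:ℕ) + 1)) :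
    Fin (n+1) → Fin (n+1) :=
  fun m => ⟨(i:ℕ) - cf n (i:ℕ) ((i:ℕ) - (j:ℕ)) α (m : ℕ), by have := i.isLt; omega⟩

end Stmt9Main

/-- Closed-form formula for the entries of `L n`:
`L n [i, j] = ∑_{α ∈ Q^I_{i,j}} ∏_{r=j}^{i-1} t (r+1) (α (i-r))`, the product being
reindexed by `q = i - r - 1 ∈ {0, …, i-j-1}` (zero-indexed), so the factor for `q` is
`t (i - q) (α q)`. -/
theorem stmt9 {R : Type*} [CommRing R] (n : ℕ) (t : ℕ → ℕ → R) (i j : Fin (n + 1)) :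
    Lmat n t i j =
      ∑ α ∈ QIset (i : ℕ) (j : ℕ),
        ∏ q : Fin ((i : ℕ) - (j : ℕ)), t ((i : ℕ) - (q : ℕ)) (α q : ℕ) := by
  classical
  open Stmt9Aux Stmt9Aux2 Stmt9Aux3 Stmt9Main in
  simp only [Lmat, Matrix.of_apply]
  by_cases hji : (j : ℕ) ≤ (i : ℕ)
  · rw [QIset, if_pos hji]
    refine Finset.sum_nbij' (Stmt9Main.toα n i j) (Stmt9Main.toPath n i j) ?_ ?_ ?_ ?_ ?_
    · -- toα maps paths to Q-sequences
      intro y hy'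
      rw [Finset.mem_filter] at hy'
      obtain ⟨-, hy, h0, hl⟩ := hy'
      obtain ⟨hstep, hfall, hg0, hgn⟩ := Stmt9Main.pathFacts hy i j h0 hl
      have hin : (i : ℕ) ≤ n := by have := i.isLt; omega
      refine Finset.mem_filter.2 ⟨Finset.mem_univ _, ?_, ?_⟩
      · intro q q' hqq'
        have hq := q.isLt
        have hq' := q'.isLt
        have hqq : (q : ℕ) ≤ (q' : ℕ) := hqq'
        obtain ⟨hKn, hgK, -, hnK, -⟩ := Stmt9Aux.Kspec (Stmt9Aux2.gOf n y) n (i : ℕ) (j : ℕ)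
          hstep hfall hg0 hgn ((i:ℕ) - (q:ℕ)) (by omega) (by omega)
        obtain ⟨hKn', hgK', -, hnK', -⟩ := Stmt9Aux.Kspec (Stmt9Aux2.gOf n y) n (i : ℕ) (j : ℕ)
          hstep hfall hg0 hgn ((i:ℕ) - (q':ℕ)) (by omega) (by omega)
        have hKm := Stmt9Aux.Kmono (Stmt9Aux2.gOf n y) n (i : ℕ) (j : ℕ)
          hstep hfall hg0 hgn ((i:ℕ) - (q:ℕ)) ((i:ℕ) - (q':ℕ)) (by omega) (by omega) (by omega)
        have hlip := (Stmt9Aux.lip (Stmt9Aux2.gOf n y) n hstep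
          (Nat.findGreatest (fun m => (i:ℕ) - (q:ℕ) ≤ Stmt9Aux2.gOf n y m) n)
          (Nat.findGreatest (fun m => (i:ℕ) - (q':ℕ) ≤ Stmt9Aux2.gOf n y m) n)
          hKm (by omega)).2
        rw [Fin.le_def]
        simp only [Stmt9Main.toα]
        omega
      · intro q
        have hq := q.isLt
        obtain ⟨hKn, hgK, -, hnK, -⟩ := Stmt9Aux.Kspec (Stmt9Aux2.gOf n y) n (i : ℕ) (j : ℕ)
          hstep hfall hg0 hgn ((i:ℕ) - (q:ℕ)) (by omega) (by omega)
        simp only [Stmt9Main.toα]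
        omega
    · -- toPath maps Q-sequences to paths
      intro y hy2
      rw [Finset.mem_filter] at hy2
      obtain ⟨-, hmono, hbd⟩ := hy2
      have hdi : (i:ℕ) - (j:ℕ) ≤ (i:ℕ) := by omega
      have hin : (i : ℕ) ≤ n := by have := i.isLt; omega
      refine Finset.mem_filter.2 ⟨Finset.mem_univ _, ?_, ?_, ?_⟩
      · intro k
        have hk := k.isLt
        have hval1 : (Stmt9Main.toPath n i j y k.succ : ℕ)
            = (i:ℕ) - Stmt9Aux3.cf n (i:ℕ) ((i:ℕ)-(j:ℕ)) y ((k:ℕ)+1) := rfl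
        have hval2 : (Stmt9Main.toPath n i j y k.castSucc : ℕ)
            = (i:ℕ) - Stmt9Aux3.cf n (i:ℕ) ((i:ℕ)-(j:ℕ)) y (k:ℕ) := rfl
        by_cases hex : ∃ q, Stmt9Aux3.Pf n (i:ℕ) ((i:ℕ)-(j:ℕ)) y q = (k:ℕ)
        · obtain ⟨q, hq⟩ := hex
          have hqlt := q.isLt
          obtain ⟨hc1, hc2⟩ := Stmt9Aux3.cf_at_Pf hmono q
          rw [hq] at hc1 hc2
          have hcle := Stmt9Aux3.cf_le (n := n) y ((k:ℕ)+1)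
          constructor
          · right
            rw [hval1, hval2, hc1, hc2]
            omega
          · intro _
            rw [hval2, hc1]
            have hb := hbd q
            unfold Stmt9Aux3.Pf at hq
            omega
        · push_neg at hex
          have hc := Stmt9Aux3.cf_succ_of_not_mem (α := y) (k:ℕ) hex
          constructor
          · exact Or.inl (Fin.ext (by rw [hval1, hval2, hc]))
          · intro habs
            rw [hval1, hval2, hc] at habs
            omega
      · exact Fin.ext (by simp [Stmt9Main.toPath, Stmt9Aux3.cf_zero])
      · refine Fin.ext ?_
        have : (Stmt9Main.toPath n i j y (Fin.last n) : ℕ)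
            = (i:ℕ) - Stmt9Aux3.cf n (i:ℕ) ((i:ℕ)-(j:ℕ)) y n := rfl
        rw [this, Stmt9Aux3.cf_n hdi hin hbd]
        omega
    · -- left inverse
      intro y hy'
      rw [Finset.mem_filter] at hy'
      obtain ⟨-, hy, h0, hl⟩ := hy'
      obtain ⟨hstep, hfall, hg0, hgn⟩ := Stmt9Main.pathFacts hy i j h0 hl
      have hin : (i : ℕ) ≤ n := by have := i.isLt; omega
      have hPf : ∀ q : Fin ((i:ℕ)-(j:ℕ)), Stmt9Aux3.Pf n (i:ℕ) ((i:ℕ)-(j:ℕ)) (Stmt9Main.toα n i j y) q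
          = Nat.findGreatest (fun m => (i:ℕ) - (q:ℕ) ≤ Stmt9Aux2.gOf n y m) n := by
        intro q
        have hq := q.isLt
        obtain ⟨hKn, hgK, -, hnK, -⟩ := Stmt9Aux.Kspec (Stmt9Aux2.gOf n y) n (i : ℕ) (j : ℕ)
          hstep hfall hg0 hgn ((i:ℕ) - (q:ℕ)) (by omega) (by omega)
        simp only [Stmt9Aux3.Pf, Stmt9Main.toα]
        omega
      have key : ∀ m, m ≤ n →
          Stmt9Aux2.gOf n y m + Stmt9Aux3.cf n (i:ℕ) ((i:ℕ)-(j:ℕ)) (Stmt9Main.toα n i j y) m = (i:ℕ) := by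
        intro m
        induction m with
        | zero => intro _; rw [Stmt9Aux3.cf_zero]; omega
        | succ m ih =>
          intro hm
          have ihm := ih (by omega)
          rcases hstep m (by omega) with hhor | hfallm
          · have hc : Stmt9Aux3.cf n (i:ℕ) ((i:ℕ)-(j:ℕ)) (Stmt9Main.toα n i j y) (m+1)
                = Stmt9Aux3.cf n (i:ℕ) ((i:ℕ)-(j:ℕ)) (Stmt9Main.toα n i j y) m := by
              apply Stmt9Aux3.cf_succ_of_not_mem
              intro q hq0
              rw [hPf q] at hq0
              have hq := q.isLt
              obtain ⟨hKn, hgK, hgK1, -, -⟩ := Stmt9Aux.Kspec (Stmt9Aux2.gOf n y) n (i : ℕ) (j : ℕ)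
                hstep hfall hg0 hgn ((i:ℕ) - (q:ℕ)) (by omega) (by omega)
              rw [hq0] at hgK hgK1
              omega
            rw [hc]
            omega
          · obtain ⟨hjm, hmi, hKf⟩ := Stmt9Aux.Kfall (Stmt9Aux2.gOf n y) n (i : ℕ) (j : ℕ)
              hstep hfall hg0 hgn m (by omega) hfallm
            have hq0d : (i:ℕ) - Stmt9Aux2.gOf n y m < (i:ℕ) - (j:ℕ) := by omega
            have hiff : ∀ q : Fin ((i:ℕ)-(j:ℕ)),
                (Stmt9Aux3.Pf n (i:ℕ) ((i:ℕ)-(j:ℕ)) (Stmt9Main.toα n i j y) q < m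
                  ↔ (q : ℕ) < (i:ℕ) - Stmt9Aux2.gOf n y m) := by
              intro q
              rw [hPf q]
              have hq := q.isLt
              obtain ⟨hKn, hgK, -, -, -⟩ := Stmt9Aux.Kspec (Stmt9Aux2.gOf n y) n (i : ℕ) (j : ℕ)
                hstep hfall hg0 hgn ((i:ℕ) - (q:ℕ)) (by omega) (by omega)
              constructor
              · intro hlt
                by_contra hcon
                -- then i - q ≤ g m, so m = K (g m) ≤ K (i - q), contradiction
                have := Stmt9Aux.Kmono (Stmt9Aux2.gOf n y) n (i : ℕ) (j : ℕ)
                  hstep hfall hg0 hgn (Stmt9Aux2.gOf n y m) ((i:ℕ) - (q:ℕ)) (by omega) (by omega) (by omega)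
                rw [hKf] at this
                omega
              · intro hlt
                -- i - q > g m, so K (i - q) ≤ K (g m) = m, and ≠ since heights differ
                have hle := Stmt9Aux.Kmono (Stmt9Aux2.gOf n y) n (i : ℕ) (j : ℕ)
                  hstep hfall hg0 hgn ((i:ℕ) - (q:ℕ)) (Stmt9Aux2.gOf n y m) (by omega) (by omega) (by omega)
                rw [hKf] at hle
                rcases eq_or_lt_of_le hle with heq | h'
                · rw [heq] at hgK; omega
                · exact h'
            have hiff1 : ∀ q : Fin ((i:ℕ)-(j:ℕ)),
                (Stmt9Aux3.Pf n (i:ℕ) ((i:ℕ)-(j:ℕ)) (Stmt9Main.toα n i j y) q < m + 1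
                  ↔ (q : ℕ) < (i:ℕ) - Stmt9Aux2.gOf n y m + 1) := by
              intro q
              rw [hPf q]
              have hq := q.isLt
              obtain ⟨hKn, hgK, -, -, -⟩ := Stmt9Aux.Kspec (Stmt9Aux2.gOf n y) n (i : ℕ) (j : ℕ)
                hstep hfall hg0 hgn ((i:ℕ) - (q:ℕ)) (by omega) (by omega)
              constructor
              · intro hlt
                by_contra hcon
                -- q > i - g m, so i - q < g m, so m = K (g m) ≤ K (i - q), and equality impossible
                have hle := Stmt9Aux.Kmono (Stmt9Aux2.gOf n y) n (i : ℕ) (j : ℕ)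
                  hstep hfall hg0 hgn (Stmt9Aux2.gOf n y m) ((i:ℕ) - (q:ℕ)) (by omega) (by omega) (by omega)
                rw [hKf] at hle
                have : Nat.findGreatest (fun m' => (i:ℕ) - (q:ℕ) ≤ Stmt9Aux2.gOf n y m') n = m := by omega
                rw [this] at hgK
                omega
              · intro hlt
                have hle := Stmt9Aux.Kmono (Stmt9Aux2.gOf n y) n (i : ℕ) (j : ℕ)
                  hstep hfall hg0 hgn ((i:ℕ) - (q:ℕ)) (Stmt9Aux2.gOf n y m) (by omega) (by omega) (by omega)
                rw [hKf] at hle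
                omega
            have hc := Stmt9Aux3.card_filter_val_lt (d := (i:ℕ)-(j:ℕ)) ((i:ℕ) - Stmt9Aux2.gOf n y m)
              (by omega) _ hiff
            have hc1 := Stmt9Aux3.card_filter_val_lt (d := (i:ℕ)-(j:ℕ)) ((i:ℕ) - Stmt9Aux2.gOf n y m + 1)
              (by omega) _ hiff1
            unfold Stmt9Aux3.cf
            rw [hc1]
            unfold Stmt9Aux3.cf at ihm
            rw [hc] at ihm
            omega
      funext m
      apply Fin.ext
      have hm := m.isLt
      have h1 : (Stmt9Main.toPath n i j (Stmt9Main.toα n i j y) m : ℕ)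
          = (i:ℕ) - Stmt9Aux3.cf n (i:ℕ) ((i:ℕ)-(j:ℕ)) (Stmt9Main.toα n i j y) (m:ℕ) := rfl
      have h2 := key (m:ℕ) (by omega)
      have h3 := Stmt9Aux2.gOf_val y m
      omega
    · -- right inverse
      intro α hα
      rw [Finset.mem_filter] at hα
      obtain ⟨-, hmono, hbd⟩ := hα
      have hdi : (i:ℕ) - (j:ℕ) ≤ (i:ℕ) := by omega
      have hin : (i : ℕ) ≤ n := by have := i.isLt; omega
      funext q
      apply Fin.ext
      have hq := q.isLt
      have hgOf : ∀ m : ℕ, m ≤ n → Stmt9Aux2.gOf n (Stmt9Main.toPath n i j α) m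
          = (i:ℕ) - Stmt9Aux3.cf n (i:ℕ) ((i:ℕ)-(j:ℕ)) α m := by
        intro m hm
        rw [Stmt9Aux2.gOf_mk _ m hm]; rfl
      have hPn := Stmt9Aux3.Pf_lt_n hdi hin hbd q
      have hKeq : Nat.findGreatest
          (fun m => (i:ℕ) - (q:ℕ) ≤ Stmt9Aux2.gOf n (Stmt9Main.toPath n i j α) m) n
          = Stmt9Aux3.Pf n (i:ℕ) ((i:ℕ)-(j:ℕ)) α q := by
        rw [Nat.findGreatest_eq_iff]
        refine ⟨by omega, ?_, ?_⟩
        · intro _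
          show (i:ℕ) - (q:ℕ) ≤ Stmt9Aux2.gOf n (Stmt9Main.toPath n i j α)
            (Stmt9Aux3.Pf n (i:ℕ) ((i:ℕ)-(j:ℕ)) α q)
          rw [hgOf _ (by omega), (Stmt9Aux3.cf_at_Pf hmono q).1]
        · intro m hm1 hm2 hcon
          have hcon' : (i:ℕ) - (q:ℕ) ≤ Stmt9Aux2.gOf n (Stmt9Main.toPath n i j α) m := hcon
          rw [hgOf m hm2] at hcon'
          have h1 := (Stmt9Aux3.cf_at_Pf (n := n) hmono q).2
          have h2 := Stmt9Aux3.cf_mono (n := n) (i := (i:ℕ)) α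
            (show Stmt9Aux3.Pf n (i:ℕ) ((i:ℕ)-(j:ℕ)) α q + 1 ≤ m by omega)
          have h3 := Stmt9Aux3.cf_le (n := n) α m
          omega
      show (Stmt9Main.toα n i j (Stmt9Main.toPath n i j α) q : ℕ) = (α q : ℕ)
      simp only [Stmt9Main.toα]
      rw [hKeq]
      simp only [Stmt9Aux3.Pf]
      omega
    · -- weights agree
      intro y hy'
      rw [Finset.mem_filter] at hy'
      obtain ⟨-, hy, h0, hl⟩ := hy'
      obtain ⟨hstep, hfall, hg0, hgn⟩ := Stmt9Main.pathFacts hy i j h0 hl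
      have hin : (i : ℕ) ≤ n := by have := i.isLt; omega
      unfold lweight
      have hfac : ∀ k : Fin n,
          (if (y k.succ : ℕ) + 1 = (y k.castSucc : ℕ)
            then t (y k.castSucc : ℕ) ((k : ℕ) + (y k.castSucc : ℕ) - n) else 1)
          = (if Stmt9Aux2.gOf n y ((k:ℕ)+1) + 1 = Stmt9Aux2.gOf n y (k:ℕ)
            then t (Stmt9Aux2.gOf n y (k:ℕ)) ((k : ℕ) + Stmt9Aux2.gOf n y (k:ℕ) - n) else 1) := by
        intro k
        have hk := k.isLt
        rw [Stmt9Aux2.gOf_mk y ((k:ℕ)+1) (by omega), Stmt9Aux2.gOf_mk y (k:ℕ) (by omega)]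
        rfl
      rw [Finset.prod_congr rfl (fun k _ => hfac k), ← Finset.prod_filter]
      refine Finset.prod_bij'
        (fun k hk => (⟨(i:ℕ) - Stmt9Aux2.gOf n y (k:ℕ), by
          rw [Finset.mem_filter] at hk
          have hk2 := k.isLt
          obtain ⟨hjm, hmi, -⟩ := Stmt9Aux.Kfall (Stmt9Aux2.gOf n y) n (i : ℕ) (j : ℕ)
            hstep hfall hg0 hgn (k:ℕ) (by omega) hk.2
          omega⟩ : Fin ((i:ℕ) - (j:ℕ))))
        (fun q hq => (⟨Nat.findGreatest (fun m => (i:ℕ) - (q:ℕ) ≤ Stmt9Aux2.gOf n y m) n, by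
          have hq2 := q.isLt
          obtain ⟨hKn, -, -, -, -⟩ := Stmt9Aux.Kspec (Stmt9Aux2.gOf n y) n (i : ℕ) (j : ℕ)
            hstep hfall hg0 hgn ((i:ℕ) - (q:ℕ)) (by omega) (by omega)
          exact hKn⟩ : Fin n))
        (fun k hk => Finset.mem_univ _)
        (fun q hq => by
          have hq2 := q.isLt
          obtain ⟨hKn, hgK, hgK1, -, -⟩ := Stmt9Aux.Kspec (Stmt9Aux2.gOf n y) n (i : ℕ) (j : ℕ)
            hstep hfall hg0 hgn ((i:ℕ) - (q:ℕ)) (by omega) (by omega)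
          refine Finset.mem_filter.2 ⟨Finset.mem_univ _, ?_⟩
          show Stmt9Aux2.gOf n y
            (Nat.findGreatest (fun m => (i:ℕ) - (q:ℕ) ≤ Stmt9Aux2.gOf n y m) n + 1) + 1
            = Stmt9Aux2.gOf n y (Nat.findGreatest (fun m => (i:ℕ) - (q:ℕ) ≤ Stmt9Aux2.gOf n y m) n)
          omega)
        (fun k hk => by
          rw [Finset.mem_filter] at hk
          have hk2 := k.isLt
          obtain ⟨hjm, hmi, hKf⟩ := Stmt9Aux.Kfall (Stmt9Aux2.gOf n y) n (i : ℕ) (j : ℕ)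
            hstep hfall hg0 hgn (k:ℕ) (by omega) hk.2
          apply Fin.ext
          show Nat.findGreatest
            (fun m => (i:ℕ) - ((i:ℕ) - Stmt9Aux2.gOf n y (k:ℕ)) ≤ Stmt9Aux2.gOf n y m) n = (k:ℕ)
          rw [show (i:ℕ) - ((i:ℕ) - Stmt9Aux2.gOf n y (k:ℕ)) = Stmt9Aux2.gOf n y (k:ℕ) by omega]
          exact hKf)
        (fun q hq => by
          have hq2 := q.isLt
          obtain ⟨hKn, hgK, -, -, -⟩ := Stmt9Aux.Kspec (Stmt9Aux2.gOf n y) n (i : ℕ) (j : ℕ)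
            hstep hfall hg0 hgn ((i:ℕ) - (q:ℕ)) (by omega) (by omega)
          apply Fin.ext
          show (i:ℕ) - Stmt9Aux2.gOf n y
            (Nat.findGreatest (fun m => (i:ℕ) - (q:ℕ) ≤ Stmt9Aux2.gOf n y m) n) = (q:ℕ)
          omega)
        (fun k hk => by
          rw [Finset.mem_filter] at hk
          have hk2 := k.isLt
          obtain ⟨hjm, hmi, hKf⟩ := Stmt9Aux.Kfall (Stmt9Aux2.gOf n y) n (i : ℕ) (j : ℕ)
            hstep hfall hg0 hgn (k:ℕ) (by omega) hk.2
          have harg1 : (i:ℕ) - ((i:ℕ) - Stmt9Aux2.gOf n y (k:ℕ)) = Stmt9Aux2.gOf n y (k:ℕ) := by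
            omega
          have harg2 : (Stmt9Main.toα n i j y
              (⟨(i:ℕ) - Stmt9Aux2.gOf n y (k:ℕ), by omega⟩ : Fin ((i:ℕ) - (j:ℕ))) : ℕ)
              = (k:ℕ) + Stmt9Aux2.gOf n y (k:ℕ) - n := by
            simp only [Stmt9Main.toα]
            rw [harg1, hKf]
          rw [harg2, harg1])
  · rw [QIset, if_neg hji]
    have hempty : (Finset.univ.filter
        (fun y : Fin (n + 1) → Fin (n + 1) => IsLPath n y ∧ y 0 = i ∧ y (Fin.last n) = j)) = ∅ := by
      rw [Finset.filter_eq_empty_iff]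
      rintro y - ⟨hy, h0, hl⟩
      obtain ⟨hstep, hfall, hg0, hgn⟩ := Stmt9Main.pathFacts hy i j h0 hl
      have := (Stmt9Aux.lip (Stmt9Aux2.gOf n y) n hstep 0 n (Nat.zero_le n) le_rfl).1
      omega
    rw [hempty, Finset.sum_empty, Finset.sum_empty]
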